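/- In the same continuous MDP (S = [0,2], A = (0,1], s → s+a, termination when s+a > 2, γ = 1), every deterministic policy (Markovian or not) has a σ-finite occupancy measure. -/
import Mathlib


open scoped ENNReal Classical

/-!
Deterministic continuous MDP on `S = [0,2]` with actions in `(0,1]`: from state
`s`, action `a` leads to `s + a`, and the trajectory terminates when `s + a > 2`;
`γ = 1`. A deterministic policy (Markovian or not) produces a single
deterministic trajectory `sₜ = ∑_{i<t} act i` (strictly increasing), which is
alive at time `t` iff `sₜ ≤ 2`. Its occupancy measure
`σ ↦ ∑ₜ 1(sₜ ≤ 2 ∧ sₜ ∈ σ)` is σ-finite: there is a countable measurable cover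
of the state space `[0,2]` by sets of finite occupancy.
-/

theorem deterministic_policy_sigma_finite
    (act : ℕ → ℝ) (hact : ∀ t, act t ∈ Set.Ioc (0 : ℝ) 1) :
    ∃ f : ℕ → Set ℝ,
      (∀ n, MeasurableSet (f n)) ∧
      (⋃ n, f n) = Set.Icc (0 : ℝ) 2 ∧
      ∀ n, (∑' t : ℕ,
        if (∑ i ∈ Finset.range t, act i) ≤ 2 ∧ (∑ i ∈ Finset.range t, act i) ∈ f n
        then (1 : ℝ≥0∞) else 0) < ⊤ := by
  set s : ℕ → ℝ := fun t => ∑ i ∈ Finset.range t, act i with hs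
  have hmono : StrictMono s := strictMono_nat_of_lt_succ (fun n => by
    simp only [hs, Finset.sum_range_succ]
    exact lt_add_of_pos_right _ (hact n).1)
  refine ⟨fun n => Nat.rec (Set.Icc 0 2 \ ⋃ m, Set.Ico (s m) (s (m+1)))
    (fun n _ => Set.Icc 0 2 ∩ Set.Ico (s n) (s (n+1))) n, ?_, ?_, ?_⟩
  · intro n
    cases n with
    | zero => exact measurableSet_Icc.diff (MeasurableSet.iUnion fun m => measurableSet_Ico)
    | succ n => exact measurableSet_Icc.inter measurableSet_Ico
  · ext x
    simp only [Set.mem_iUnion]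
    constructor
    · rintro ⟨n, hn⟩
      cases n with
      | zero => exact hn.1
      | succ n => exact hn.1
    · intro hx
      by_cases h : ∃ m, x ∈ Set.Ico (s m) (s (m+1))
      · obtain ⟨m, hm⟩ := h
        exact ⟨m + 1, hx, hm⟩
      · exact ⟨0, hx, by simpa [Set.mem_iUnion] using h⟩
  · intro n
    cases n with
    | zero =>
      have hlt : (∑' _ : ℕ, (0:ℝ≥0∞)) < ⊤ := by simp
      refine lt_of_le_of_lt (le_of_eq (tsum_congr fun t => ?_)) hlt
      rw [if_neg]
      rintro ⟨-, hmem⟩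
      exact hmem.2 (Set.mem_iUnion.2 ⟨t, le_refl _, hmono (Nat.lt_succ_self t)⟩)
    | succ n =>
      refine lt_of_le_of_lt (le_of_eq (tsum_eq_single n fun t ht => ?_)) ?_
      · rw [if_neg]
        rintro ⟨-, hmem⟩
        have h1 : s n ≤ s t := hmem.2.1
        have h2 : s t < s (n+1) := hmem.2.2
        have hn1 : n ≤ t := hmono.le_iff_le.mp h1
        have hn2 : t < n + 1 := hmono.lt_iff_lt.mp h2
        omega
      · split <;> simp
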